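/- Let α ∈ (0,1), β ∈ (0,1], S > 0, σ_N² > 0. Viewed as a function of σ_ε² > 0, the difference D(σ_ε²) = SNR_post(σ_ε²) - SNR_int(σ_ε²), where SNR_post = (α+(1-α)β)² S / (α² σ_ε² + (1-α)² σ_N²) and SNR_int = S/σ_ε², has exactly one zero on (0, ∞), located at σ_ε² = τ(β) = (1-α)σ_N² / (β(2α+(1-α)β)). -/
import Mathlib


theorem snr_unique_crossover (α β S σN2 : ℝ)
    (hα : α ∈ Set.Ioo (0:ℝ) 1) (hβ : β ∈ Set.Ioc (0:ℝ) 1)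
    (hS : 0 < S) (hσN : 0 < σN2) :
    ∀ σε2 : ℝ, 0 < σε2 →
      ((α + (1-α)*β)^2 * S / (α^2 * σε2 + (1-α)^2 * σN2) - S / σε2 = 0 ↔
        σε2 = (1-α) * σN2 / (β * (2*α + (1-α)*β))) := by
  obtain ⟨hα0, hα1⟩ := hα
  obtain ⟨hβ0, hβ1⟩ := hβ
  intro σε2 hε
  have h1α : 0 < 1 - α := by linarith
  have hd : 0 < α^2 * σε2 + (1-α)^2 * σN2 := by positivity
  have hc : 0 < β * (2*α + (1-α)*β) := by
    apply mul_pos hβ0; nlinarith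
  rw [sub_eq_zero, div_eq_div_iff hd.ne' hε.ne', eq_div_iff hc.ne']
  constructor
  · intro h
    have h' : S * ((1-α) * (σε2 * (β * (2*α + (1-α)*β)))) = S * ((1-α) * ((1-α) * σN2)) := by
      linear_combination h
    exact mul_left_cancel₀ h1α.ne' (mul_left_cancel₀ hS.ne' h')
  · intro h
    linear_combination (S * (1-α)) * h
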